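/- Adjoint identity for the Stokes bilinear form: define s(u, q; v, r) := a(u,v) − ⟨q, Dv⟩ − ⟨r, Du⟩. Then for all u, v ∈ V and q, r ∈ Q, s(Su, 𝕢u + Π_I^⊥q; v, r) = s(u, q; S†v, 𝕢†v + Π_I^⊥r), where (Su, 𝕢u) and (S†v, 𝕢†v) are the Stokes extension and adjoint Stokes extension pairs and Π_I^⊥ is the orthogonal complement projection of D(I) in Q. -/

import Mathlib

open scoped RealInnerProductSpace

/-- adjoint identity for the Stokes bilinear form
`s(Su, 𝕢u + Π_I^⊥ q; v, r) = s(u, q; S†v, 𝕢†v + Π_I^⊥ r)`, where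
`s(u, q; v, r) = a(u,v) − ⟨q, Dv⟩ − ⟨r, Du⟩`. -/
theorem stokes_adjoint_identity {V Q : Type*}
    [NormedAddCommGroup V] [InnerProductSpace ℝ V] [FiniteDimensional ℝ V]
    [NormedAddCommGroup Q] [InnerProductSpace ℝ Q] [FiniteDimensional ℝ Q]
    (a : V →ₗ[ℝ] V →ₗ[ℝ] ℝ) (α : ℝ) (hα : 0 < α)
    (hcoer : ∀ w : V, α * ‖w‖ ^ 2 ≤ a w w)
    (D : V →ₗ[ℝ] Q) (I : Submodule ℝ V)
    (u v : V) (q r : Q)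
    (Su : V) (qu : Q)
    (hqu : qu ∈ Submodule.map D I) (hSu0 : Su - u ∈ I)
    (hSu1 : ∀ w ∈ I, a Su w - ⟪qu, D w⟫ = 0)
    (hSu2 : ∀ s ∈ Submodule.map D I, ⟪s, D Su⟫ = 0)
    (Sdv : V) (qdv : Q)
    (hqdv : qdv ∈ Submodule.map D I) (hSdv0 : Sdv - v ∈ I)
    (hSdv1 : ∀ w ∈ I, a w Sdv - ⟪qdv, D w⟫ = 0)
    (hSdv2 : ∀ s ∈ Submodule.map D I, ⟪s, D Sdv⟫ = 0) :
    a Su v - ⟪qu + (q - (Submodule.orthogonalProjection (Submodule.map D I) q : Q)), D v⟫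
      - ⟪r, D Su⟫ =
    a u Sdv - ⟪q, D Sdv⟫
      - ⟪qdv + (r - (Submodule.orthogonalProjection (Submodule.map D I) r : Q)), D u⟫ := by
  set J := Submodule.map D I with hJ
  have hvS : v - Sdv ∈ I := by simpa using I.neg_mem hSdv0
  have f1 : a Su (v - Sdv) - ⟪qu, D (v - Sdv)⟫ = 0 := hSu1 _ hvS
  have f2 : a (Su - u) Sdv - ⟪qdv, D (Su - u)⟫ = 0 := hSdv1 _ hSu0
  have f3 : ⟪qdv, D Su⟫ = 0 := hSu2 _ hqdv
  have f4 : ⟪qu, D Sdv⟫ = 0 := hSdv2 _ hqu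
  have f5 : ⟪(Submodule.orthogonalProjection J q : Q), D Sdv⟫ = 0 :=
    hSdv2 _ (Submodule.orthogonalProjection J q).2
  have f6 : ⟪(Submodule.orthogonalProjection J r : Q), D Su⟫ = 0 :=
    hSu2 _ (Submodule.orthogonalProjection J r).2
  have hπq : q - (Submodule.orthogonalProjection J q : Q) ∈ Jᗮ :=
    Submodule.sub_starProjection_mem_orthogonal (K := J) q
  have hπr : r - (Submodule.orthogonalProjection J r : Q) ∈ Jᗮ :=
    Submodule.sub_starProjection_mem_orthogonal (K := J) r
  have f7 : ⟪q - (Submodule.orthogonalProjection J q : Q), D (v - Sdv)⟫ = 0 := by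
    rw [real_inner_comm]
    exact (Submodule.mem_orthogonal J _).mp hπq _ (Submodule.mem_map_of_mem hvS)
  have f8 : ⟪r - (Submodule.orthogonalProjection J r : Q), D (Su - u)⟫ = 0 := by
    rw [real_inner_comm]
    exact (Submodule.mem_orthogonal J _).mp hπr _ (Submodule.mem_map_of_mem hSu0)
  simp only [map_sub, LinearMap.sub_apply, inner_sub_left, inner_sub_right,
    inner_add_left] at f1 f2 f7 f8 ⊢
  linarith [f1, f2, f3, f4, f5, f6, f7, f8]
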